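/- Let p and q be distinct sentential variables. Then C(p,q) ∧ p ⊨_Δ Oq. -/

import Mathlib

/-- Formulas of the preference language L, generated from sentential
variables by negation, conjunction, and the binary connective ⪰. -/
inductive Fml (α : Type) : Type where
  | var : α → Fml α
  | neg : Fml α → Fml α
  | conj : Fml α → Fml α → Fml α
  | succeq : Fml α → Fml α → Fml α

namespace Fml

variable {α : Type}

/-- φ∨ψ := ¬(¬φ∧¬ψ) -/
def disj (φ ψ : Fml α) : Fml α := neg (conj (neg φ) (neg ψ))
/-- φ→ψ := ¬φ∨ψ -/
def impl (φ ψ : Fml α) : Fml α := disj (neg φ) ψ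
/-- φ↔ψ := (φ→ψ)∧(ψ→φ) -/
def iffF (φ ψ : Fml α) : Fml α := conj (impl φ ψ) (impl ψ φ)
/-- φ≻ψ := (φ⪰ψ)∧¬(ψ⪰φ) -/
def succ (φ ψ : Fml α) : Fml α := conj (succeq φ ψ) (neg (succeq ψ φ))
/-- ⊤ := p→p for a fixed variable p -/
def topF (p : α) : Fml α := impl (var p) (var p)
/-- ⊥ := ¬⊤ -/
def botF (p : α) : Fml α := neg (topF p)
/-- ◻φ := ¬(¬φ⪰¬φ) -/
def box (φ : Fml α) : Fml α := neg (succeq (neg φ) (neg φ))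
/-- ◇φ := φ⪰φ -/
def dia (φ : Fml α) : Fml α := succeq φ φ
/-- Conditional obligation C(φ,ψ) := (φ∧ψ) ≻ (φ∧¬ψ) -/
def Cond (φ ψ : Fml α) : Fml α := succ (conj φ ψ) (conj φ (neg ψ))
/-- Obligation Oψ := C(⊤,ψ), where ⊤ uses the fixed variable p -/
def Ob (p : α) (ψ : Fml α) : Fml α := Cond (topF p) ψ
/-- Permission Pψ := ¬O¬ψ -/
def Perm (p : α) (ψ : Fml α) : Fml α := neg (Ob p (neg ψ))

end Fml

/-- A model (W,S,U,T): a nonempty set of worlds, a selection function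
picking a member of each nonempty set of worlds, a real-valued utility
function, and a truth-assignment. -/
structure Model (α : Type) : Type 1 where
  W : Type
  nonempty : Nonempty W
  S : W → Set W → W
  S_mem : ∀ (w : W) (A : Set W), A.Nonempty → S w A ∈ A
  U : W → ℝ
  T : α → Set W

open Classical in
/-- The proposition ⟦φ⟧_M expressed by φ in the model M. -/
noncomputable def sat {α : Type} (M : Model α) : Fml α → Set M.W
  | .var p => M.T p
  | .neg θ => (sat M θ)ᶜ
  | .conj θ ψ => sat M θ ∩ sat M ψ
  | .succeq θ ψ =>
      if sat M θ = ∅ ∨ sat M ψ = ∅ then ∅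
      else {w | M.U (M.S w (sat M θ)) ≥ M.U (M.S w (sat M ψ))}

/-- φ ⊨ ψ : in every model, ⟦φ⟧ ⊆ ⟦ψ⟧. -/
def Implies {α : Type} (φ ψ : Fml α) : Prop :=
  ∀ M : Model α, sat M φ ⊆ sat M ψ

/-- ⊨ φ : in every model, ⟦φ⟧ = W. -/
def Valid {α : Type} (φ : Fml α) : Prop :=
  ∀ M : Model α, sat M φ = Set.univ

/-- S is a selection function on W = 𝒫(Props): for each world w and
nonempty set A of worlds, S w A ∈ A. -/
def IsSelection {α : Type} (S : Set α → Set (Set α) → Set α) : Prop :=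
  ∀ (w : Set α) (A : Set (Set α)), A.Nonempty → S w A ∈ A

/-- S is Δ-based: no w₁ ∈ A has w Δ w₁ properly included in w Δ S(w,A). -/
def DeltaBased {α : Type} (S : Set α → Set (Set α) → Set α) : Prop :=
  ∀ (w : Set α) (A : Set (Set α)), A.Nonempty →
    ¬ ∃ w1 ∈ A, symmDiff w w1 ⊂ symmDiff w (S w A)

/-- A Δ model: W = 𝒫(Props), T(p) = {w | p ∈ w}, and a Δ-based
selection function. -/
structure DeltaModel (α : Type) : Type where
  S : Set α → Set (Set α) → Set α
  S_mem : ∀ (w : Set α) (A : Set (Set α)), A.Nonempty → S w A ∈ A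
  delta : DeltaBased S
  U : Set α → ℝ

/-- The underlying model of a Δ model. -/
def DeltaModel.toModel {α : Type} (M : DeltaModel α) : Model α where
  W := Set α
  nonempty := ⟨∅⟩
  S := M.S
  S_mem := M.S_mem
  U := M.U
  T := fun p => {w : Set α | p ∈ w}

/-- φ ⊨_Δ ψ : in every Δ model, ⟦φ⟧ ⊆ ⟦ψ⟧. -/
def DeltaImplies {α : Type} (φ ψ : Fml α) : Prop :=
  ∀ M : DeltaModel α, sat M.toModel φ ⊆ sat M.toModel ψ

/-- The g-distance between two worlds: the (possibly infinite) sum of the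
weights of the variables in their symmetric difference. -/
noncomputable def gdist {α : Type} (g : α → ℝ) (w0 w1 : Set α) : ENNReal :=
  ∑' v : ↥(symmDiff w0 w1), ENNReal.ofReal (g v)

/-- S is g-based: no w' ∈ A is strictly g-closer to w than S(w,A). -/
def GBased {α : Type} (g : α → ℝ) (S : Set α → Set (Set α) → Set α) : Prop :=
  ∀ (w : Set α) (A : Set (Set α)), A.Nonempty →
    ¬ ∃ w' ∈ A, gdist g w w' < gdist g w (S w A)


lemma sel_eq {α : Type} (M : DeltaModel α) (w a : Set α) (A : Set (Set α))
    (ha : a ∈ A) (h : symmDiff w a ⊆ symmDiff w (M.S w A)) : M.S w A = a := by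
  by_contra hne
  exact M.delta w A ⟨a, ha⟩ ⟨a, ha, h.ssubset_of_ne fun he =>
    hne (symmDiff_right_injective w he).symm⟩

lemma sel_q {α : Type} (M : DeltaModel α) (w : Set α) (q : α) (A : Set (Set α))
    (hA : A ⊆ {v | q ∈ v}) (ha : w ∪ {q} ∈ A) : M.S w A = w ∪ {q} := by
  have hs : q ∈ M.S w A := hA (M.S_mem w A ⟨_, ha⟩)
  apply sel_eq M w _ A ha
  intro x hx
  simp only [Set.mem_symmDiff, Set.mem_union, Set.mem_singleton_iff] at hx ⊢
  rcases hx with ⟨hx1, hx2⟩ | ⟨hx1, hx2⟩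
  · exact absurd (Or.inl hx1) hx2
  · rcases hx1 with h | rfl
    · exact absurd h hx2
    · exact Or.inr ⟨hs, hx2⟩

lemma sel_nq {α : Type} (M : DeltaModel α) (w : Set α) (q : α) (A : Set (Set α))
    (hA : A ⊆ {v | q ∉ v}) (ha : w \ {q} ∈ A) : M.S w A = w \ {q} := by
  have hs : q ∉ M.S w A := hA (M.S_mem w A ⟨_, ha⟩)
  apply sel_eq M w _ A ha
  intro x hx
  simp only [Set.mem_symmDiff, Set.mem_diff, Set.mem_singleton_iff] at hx ⊢
  rcases hx with ⟨hx1, hx2⟩ | ⟨hx1, hx2⟩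
  · push_neg at hx2
    have : x = q := hx2 hx1
    subst this
    exact Or.inl ⟨hx1, hs⟩
  · exact absurd hx1.1 hx2

open Fml in
theorem stmt_13 {α : Type} (p q : α) (hpq : p ≠ q) (p0 : α) :
    DeltaImplies (conj (Cond (var p) (var q)) (var p)) (Ob p0 (var q)) := by
  refine fun M (w : Set α) hw => ?_
  simp only [Cond, succ, Ob, topF, Fml.impl, disj, sat, DeltaModel.toModel,
    Set.mem_inter_iff, Set.mem_compl_iff, Set.mem_setOf_eq, compl_compl,
    Set.inter_compl_self, Set.compl_empty, Set.univ_inter] at hw ⊢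
  obtain ⟨⟨h1, h2⟩, hp⟩ := hw
  have haA : w ∪ {q} ∈ {v : Set α | p ∈ v} ∩ {v : Set α | q ∈ v} :=
    ⟨Or.inl hp, Or.inr rfl⟩
  have hbB : w \ {q} ∈ {v : Set α | p ∈ v} ∩ {v : Set α | q ∈ v}ᶜ :=
    ⟨⟨hp, hpq⟩, fun h => h.2 rfl⟩
  have hAne : ({v : Set α | p ∈ v} ∩ {v : Set α | q ∈ v}) ≠ ∅ :=
    Set.nonempty_iff_ne_empty.mp ⟨_, haA⟩
  have hBne : ({v : Set α | p ∈ v} ∩ {v : Set α | q ∈ v}ᶜ) ≠ ∅ :=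
    Set.nonempty_iff_ne_empty.mp ⟨_, hbB⟩
  have hQne : ({v : Set α | q ∈ v}) ≠ ∅ :=
    Set.nonempty_iff_ne_empty.mp ⟨_, haA.2⟩
  have hQcne : ({v : Set α | q ∈ v}ᶜ) ≠ ∅ :=
    Set.nonempty_iff_ne_empty.mp ⟨_, hbB.2⟩
  simp only [hAne, hBne, or_self, ↓reduceIte] at h1 h2
  have eA : M.S w ({v : Set α | p ∈ v} ∩ {v : Set α | q ∈ v}) = w ∪ {q} :=
    sel_q M w q _ (fun v hv => hv.2) haA
  have eB : M.S w ({v : Set α | p ∈ v} ∩ {v : Set α | q ∈ v}ᶜ) = w \ {q} :=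
    sel_nq M w q _ (fun v hv => hv.2) hbB
  have eQ : M.S w ({v : Set α | q ∈ v}) = w ∪ {q} :=
    sel_q M w q _ (fun v hv => hv) haA.2
  have eQc : M.S w ({v : Set α | q ∈ v}ᶜ) = w \ {q} :=
    sel_nq M w q _ (fun v hv => hv) hbB.2
  simp only [Set.mem_setOf_eq] at h1 h2
  simp only [eA, eB] at h1 h2
  show w ∈ (if {v : Set α | q ∈ v} = ∅ ∨ {v : Set α | q ∈ v}ᶜ = ∅ then ∅
      else {v : Set α | M.U (M.S v {v : Set α | q ∈ v}) ≥ M.U (M.S v {v : Set α | q ∈ v}ᶜ)}) ∩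
    (if {v : Set α | q ∈ v}ᶜ = ∅ ∨ {v : Set α | q ∈ v} = ∅ then ∅
      else {v : Set α | M.U (M.S v {v : Set α | q ∈ v}ᶜ) ≥ M.U (M.S v {v : Set α | q ∈ v})})ᶜ
  simp only [hQne, hQcne, or_self, ↓reduceIte, Set.mem_inter_iff, Set.mem_compl_iff]
  simp only [Set.mem_setOf_eq, eQ, eQc]
  exact ⟨h1, fun h => h2 (show M.U (M.S w ({v : Set α | p ∈ v} ∩ {v : Set α | q ∈ v}ᶜ)) ≥
    M.U (M.S w ({v : Set α | p ∈ v} ∩ {v : Set α | q ∈ v})) by rw [eA, eB]; exact h)⟩
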